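/- Let A be an F_p-algebra and (M, ξ), (N, η) pairs of A-modules with p-nilpotent A-linear endomorphisms. Under the correspondence sending (M, ξ) to the comodule (M, exp(ξε)), the tensor product comodule M ⊗_A N corresponds to the endomorphism ξ ⊗ id_N + id_M ⊗ η of M ⊗_A N; in particular (ξ ⊗ id + id ⊗ η)^p = 0 and exp((ξ⊗id + id⊗η)ε) = (exp(ξε) ⊗ exp(ηε)) composed with multiplication in A[ε]/(ε^p). -/
import Mathlib

open Polynomial TensorProduct

noncomputable section

/-- `A[ε] = A[x]/(x^p)`. -/
abbrev Aeps (p : ℕ) (A : Type*) [CommRing A] : Type _ :=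
  AdjoinRoot ((X : A[X]) ^ p)

/-- The class of `x`, i.e. `ε`. -/
def eps (p : ℕ) (A : Type*) [CommRing A] : Aeps p A := AdjoinRoot.root _

/-- The inverse of `i!` in `A` (through `ℤ/p`). -/
def invFact (p : ℕ) (A : Type*) [CommRing A] [CharP A p] (i : ℕ) : A :=
  ZMod.castHom (dvd_refl p) A ((i.factorial : ZMod p)⁻¹)

/-- The coaction `exp(ξ ε) : M → M ⊗ A[ε]/(ε^p)`, `m ↦ ∑ ξ^i(m)/i! ⊗ ε^i`. -/
def expCoact (p : ℕ) (A : Type*) [CommRing A] [CharP A p]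
    {M : Type*} [AddCommGroup M] [Module A M] (ξ : Module.End A M) :
    M →ₗ[A] M ⊗[A] Aeps p A :=
  ∑ i ∈ Finset.range p,
    invFact p A i • ((TensorProduct.mk A M (Aeps p A)).flip ((eps p A) ^ i) ∘ₗ (ξ ^ i))

lemma eps_pow_self (p : ℕ) (A : Type*) [CommRing A] : (eps p A) ^ p = 0 := by
  have : (eps p A) ^ p = AdjoinRoot.mk ((X : A[X]) ^ p) ((X : A[X]) ^ p) := by
    rw [eps, map_pow, AdjoinRoot.mk_X]
  rw [this, AdjoinRoot.mk_self]

lemma eps_pow_of_le (p : ℕ) (A : Type*) [CommRing A] {k : ℕ} (h : p ≤ k) :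
    (eps p A) ^ k = 0 := by
  rw [← Nat.add_sub_cancel' h, pow_add, eps_pow_self, zero_mul]

lemma invFact_mul (p : ℕ) [Fact p.Prime] (A : Type*) [CommRing A] [CharP A p]
    {i j : ℕ} (h : i + j < p) :
    invFact p A i * invFact p A j = ((i + j).choose i : A) * invFact p A (i + j) := by
  have hp := (Fact.out : p.Prime)
  have hf : ∀ {k : ℕ}, k < p → ((k.factorial : ZMod p) ≠ 0) := by
    intro k hk
    rw [Ne, ZMod.natCast_eq_zero_iff]
    exact fun hd => absurd (hp.dvd_factorial.mp hd) (not_le.mpr hk)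
  have key : ((i.factorial : ZMod p))⁻¹ * ((j.factorial : ZMod p))⁻¹ =
      ((i + j).choose i : ZMod p) * (((i + j).factorial : ZMod p))⁻¹ := by
    have h1 := hf (lt_of_le_of_lt (Nat.le_add_right i j) h)
    have h2 := hf (lt_of_le_of_lt (Nat.le_add_left j i) h)
    have h3 := hf h
    field_simp
    rw [← Nat.choose_mul_factorial_mul_factorial (Nat.le_add_right i j),
      Nat.add_sub_cancel_left]
    push_cast
    ring
  rw [invFact, invFact, invFact, ← map_mul, key, map_mul, map_natCast]

lemma expCoact_apply (p : ℕ) (A : Type*) [CommRing A] [CharP A p]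
    {M : Type*} [AddCommGroup M] [Module A M] (ξ : Module.End A M) (x : M) :
    expCoact p A ξ x =
      ∑ i ∈ Finset.range p, invFact p A i • ((ξ ^ i) x ⊗ₜ[A] ((eps p A) ^ i)) := by
  simp [expCoact, TensorProduct.mk_apply]

lemma sum_aux {β : Type*} [AddCommMonoid β] (n : ℕ) (f : ℕ → ℕ → β)
    (hf : ∀ i j, n ≤ i + j → f i j = 0) :
    ∑ k ∈ Finset.range n, ∑ i ∈ Finset.range (k + 1), f i (k - i) =
    ∑ i ∈ Finset.range n, ∑ j ∈ Finset.range n, f i j := by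
  classical
  rw [← Finset.sum_product', Finset.sum_sigma',
    ← Finset.sum_filter_add_sum_filter_not (Finset.range n ×ˢ Finset.range n)
      (fun q => q.1 + q.2 < n)]
  have h0 : ∑ q ∈ (Finset.range n ×ˢ Finset.range n).filter (fun q => ¬ q.1 + q.2 < n),
      f q.1 q.2 = 0 := by
    apply Finset.sum_eq_zero
    intro q hq
    simp only [Finset.mem_filter] at hq
    exact hf _ _ (not_lt.mp hq.2)
  rw [h0, add_zero]
  apply Finset.sum_nbij' (i := fun x => (x.2, x.1 - x.2)) (j := fun q => ⟨q.1 + q.2, q.1⟩)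
  · intro x hx
    simp only [Finset.mem_sigma, Finset.mem_range] at hx
    have h2 : x.2 ≤ x.1 := Nat.lt_succ_iff.mp hx.2
    simp only [Finset.mem_filter, Finset.mem_product, Finset.mem_range]
    refine ⟨⟨lt_of_le_of_lt h2 hx.1, lt_of_le_of_lt (Nat.sub_le _ _) hx.1⟩, ?_⟩
    rw [Nat.add_sub_cancel' h2]
    exact hx.1
  · intro q hq
    simp only [Finset.mem_filter, Finset.mem_product, Finset.mem_range] at hq
    simp only [Finset.mem_sigma, Finset.mem_range]
    exact ⟨hq.2, Nat.lt_succ_of_le (Nat.le_add_right _ _)⟩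
  · intro x hx
    simp only [Finset.mem_sigma, Finset.mem_range] at hx
    have h2 : x.2 ≤ x.1 := Nat.lt_succ_iff.mp hx.2
    ext <;> simp [Nat.add_sub_cancel' h2]
  · intro q hq
    simp
  · intro x hx
    rfl

/-- Under the correspondence `(M, ξ) ↦ (M, exp(ξε))`, the tensor product comodule
`M ⊗ N` corresponds to `ζ = ξ ⊗ id + id ⊗ η`: this `ζ` is again `p`-nilpotent and
`exp(ζε)` equals `exp(ξε) ⊗ exp(ηε)` followed by reshuffling and multiplication in
`A[ε]/(ε^p)`. -/
theorem stmt11 (p : ℕ) [Fact p.Prime] (A : Type*) [CommRing A] [CharP A p]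
    (M N : Type*) [AddCommGroup M] [Module A M] [AddCommGroup N] [Module A N]
    (ξ : Module.End A M) (η : Module.End A N) (hξ : ξ ^ p = 0) (hη : η ^ p = 0)
    (ζ : Module.End A (M ⊗[A] N))
    (hζ : ζ = LinearMap.rTensor N ξ + LinearMap.lTensor M η) :
    ζ ^ p = 0 ∧
      expCoact p A ζ =
        LinearMap.lTensor (M ⊗[A] N) (LinearMap.mul' A (Aeps p A)) ∘ₗ
          (TensorProduct.tensorTensorTensorComm A M (Aeps p A) N
              (Aeps p A)).toLinearMap ∘ₗ
            TensorProduct.map (expCoact p A ξ) (expCoact p A η) := by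
  have hp : p.Prime := Fact.out
  have hc : Commute (LinearMap.rTensor N ξ) (LinearMap.lTensor M η) := by
    show _ * _ = _ * _
    rw [Module.End.mul_eq_comp, Module.End.mul_eq_comp, LinearMap.rTensor_comp_lTensor,
      LinearMap.lTensor_comp_rTensor]
  have hcast : ((p : ℕ) : Module.End A (M ⊗[A] N)) = 0 := by
    rw [← map_natCast (algebraMap A (Module.End A (M ⊗[A] N))) p, CharP.cast_eq_zero, map_zero]
  constructor
  · rw [hζ, hc.add_pow]
    apply Finset.sum_eq_zero
    intro i hi
    rw [Finset.mem_range, Nat.lt_succ_iff] at hi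
    rcases hi.lt_or_eq with hi' | rfl
    · rcases Nat.eq_zero_or_pos i with rfl | hpos
      · rw [Nat.sub_zero, LinearMap.lTensor_pow, hη, LinearMap.lTensor_zero]
        simp
      · obtain ⟨c, hcc⟩ := hp.dvd_choose_self hpos.ne' hi'
        rw [hcc, Nat.cast_mul, hcast, zero_mul, mul_zero]
    · rw [LinearMap.rTensor_pow, hξ, LinearMap.rTensor_zero]
      simp
  · apply TensorProduct.ext'
    intro m n
    have hz : ∀ k, (ζ ^ k) (m ⊗ₜ[A] n) =
        ∑ i ∈ Finset.range (k + 1),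
          (k.choose i) • ((ξ ^ i) m ⊗ₜ[A] (η ^ (k - i)) n) := by
      intro k
      rw [hζ, hc.add_pow, LinearMap.sum_apply]
      refine Finset.sum_congr rfl fun i _ => ?_
      rw [Module.End.mul_apply, Module.End.mul_apply, Module.End.natCast_apply,
        LinearMap.rTensor_pow, LinearMap.lTensor_pow, map_nsmul, map_nsmul,
        LinearMap.lTensor_tmul, LinearMap.rTensor_tmul]
    set F : ℕ → ℕ → (M ⊗[A] N) ⊗[A] Aeps p A := fun i j =>
      (invFact p A i * invFact p A j) •
        (((ξ ^ i) m ⊗ₜ[A] (η ^ j) n) ⊗ₜ[A] ((eps p A) ^ (i + j))) with hF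
    have hf0 : ∀ i j, p ≤ i + j → F i j = 0 := by
      intro i j hij
      rw [hF]
      simp only
      rw [eps_pow_of_le p A hij, TensorProduct.tmul_zero, smul_zero]
    have hLHS : expCoact p A ζ (m ⊗ₜ[A] n) =
        ∑ k ∈ Finset.range p, ∑ i ∈ Finset.range (k + 1), F i (k - i) := by
      rw [expCoact_apply]
      refine Finset.sum_congr rfl fun k hk => ?_
      rw [Finset.mem_range] at hk
      rw [hz k, TensorProduct.sum_tmul, Finset.smul_sum]
      refine Finset.sum_congr rfl fun i hi => ?_
      rw [Finset.mem_range, Nat.lt_succ_iff] at hi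
      have hik : i + (k - i) = k := Nat.add_sub_cancel' hi
      rw [hF]
      simp only
      rw [hik, ← Nat.cast_smul_eq_nsmul A (k.choose i), ← TensorProduct.smul_tmul', smul_smul]
      congr 1
      rw [invFact_mul p A (show i + (k - i) < p by omega), hik]
      ring
    have hRHS :
        (LinearMap.lTensor (M ⊗[A] N) (LinearMap.mul' A (Aeps p A)) ∘ₗ
          (TensorProduct.tensorTensorTensorComm A M (Aeps p A) N
              (Aeps p A)).toLinearMap ∘ₗ
            TensorProduct.map (expCoact p A ξ) (expCoact p A η)) (m ⊗ₜ[A] n) =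
        ∑ i ∈ Finset.range p, ∑ j ∈ Finset.range p, F i j := by
      rw [LinearMap.comp_apply, LinearMap.comp_apply, TensorProduct.map_tmul,
        expCoact_apply, expCoact_apply]
      rw [TensorProduct.sum_tmul, map_sum, map_sum]
      refine Finset.sum_congr rfl fun i _ => ?_
      rw [TensorProduct.tmul_sum, map_sum, map_sum]
      refine Finset.sum_congr rfl fun j _ => ?_
      rw [hF]
      simp only
      rw [TensorProduct.tmul_smul, ← TensorProduct.smul_tmul', map_smul, map_smul, map_smul,
        map_smul, smul_smul, mul_comm (invFact p A j)]
      congr 1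
      rw [LinearEquiv.coe_coe, TensorProduct.tensorTensorTensorComm_tmul,
        LinearMap.lTensor_tmul, LinearMap.mul'_apply, ← pow_add]
    rw [hLHS, hRHS]
    exact sum_aux p F hf0

end
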